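/- Let λ : ℝ × ℝ → ℝ and v : ℝ → ℝ be continuous with compact support, and let θ : ℝ → ℝ denote the Heaviside step function (θ(x) = 1 for x ≥ 0 and θ(x) = 0 for x < 0). Then for every τ ∈ ℝ, ∫_ℝ ( ∫_τ^{τ+ξ} λ(ρ−ξ, ρ)·v(ρ) dρ ) dξ = ∫_ℝ v(ρ) · ( ∫_ℝ (θ(τ−ζ) − θ(τ−ρ)) · λ(ζ, ρ) dζ ) dρ, where ∫_τ^{τ+ξ} denotes the oriented integral (equal to minus ∫_{τ+ξ}^τ when ξ < 0). -/
import Mathlib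


open MeasureTheory

private def heavHomeo : ℝ × ℝ ≃ₜ ℝ × ℝ where
  toFun p := (p.2 - p.1, p.2)
  invFun p := (p.2 - p.1, p.2)
  left_inv p := by simp
  right_inv p := by simp
  continuous_toFun := by continuity
  continuous_invFun := by continuity

/-- Fubini-type rewriting with Heaviside step functions that converts the boundary term
Π(q,τ) of the non-local Noether identity into ∫ v(ρ) P(τ,ρ) dρ with
P(τ,ρ) = ∫ (θ(τ−ζ)−θ(τ−ρ)) λ(ζ,ρ) dζ. -/
theorem stmt1 (lam : ℝ × ℝ → ℝ) (v : ℝ → ℝ)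
    (hlam : Continuous lam) (hlamc : HasCompactSupport lam)
    (hv : Continuous v) (hvc : HasCompactSupport v)
    (θ : ℝ → ℝ) (hθ : ∀ x, θ x = if 0 ≤ x then 1 else 0) (τ : ℝ) :
    ∫ ξ : ℝ, (∫ ρ in τ..(τ + ξ), lam (ρ - ξ, ρ) * v ρ)
      = ∫ ρ : ℝ, v ρ * ∫ ζ : ℝ, (θ (τ - ζ) - θ (τ - ρ)) * lam (ζ, ρ) := by
  classical
  set f : ℝ × ℝ → ℝ := fun p => lam (p.2 - p.1, p.2) * v p.2 with hfdef
  have hfcont : Continuous f := by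
    apply Continuous.mul
    · exact hlam.comp (by continuity)
    · exact hv.comp continuous_snd
  have hfsupp : HasCompactSupport f := by
    have h1 : HasCompactSupport (lam ∘ heavHomeo) := hlamc.comp_homeomorph heavHomeo
    have : f = (lam ∘ heavHomeo) * fun p : ℝ × ℝ => v p.2 := by
      funext p; rfl
    rw [this]
    exact h1.mul_right
  have hfint : Integrable f := hfcont.integrable_of_hasCompactSupport hfsupp
  set W : ℝ → ℝ → ℝ := fun ξ ρ =>
    (if τ < ρ ∧ ρ ≤ τ + ξ then (1 : ℝ) else 0) -
      (if τ + ξ < ρ ∧ ρ ≤ τ then (1 : ℝ) else 0) with hWdef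
  set H : ℝ → ℝ → ℝ := fun ξ ρ => W ξ ρ * f (ξ, ρ) with hHdef
  -- Integrability of the uncurried H
  have hWm : Measurable (fun p : ℝ × ℝ => W p.1 p.2) := by
    apply Measurable.sub
    · refine Measurable.ite ?_ measurable_const measurable_const
      exact MeasurableSet.inter
        (measurableSet_lt measurable_const measurable_snd)
        (measurableSet_le measurable_snd (measurable_const.add measurable_fst))
    · refine Measurable.ite ?_ measurable_const measurable_const
      exact MeasurableSet.inter
        (measurableSet_lt (measurable_const.add measurable_fst) measurable_snd)
        (measurableSet_le measurable_snd measurable_const)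
  have hHint : Integrable (Function.uncurry H) := by
    refine hfint.mono ?_ (Filter.Eventually.of_forall ?_)
    · exact (hWm.mul hfcont.measurable).aestronglyMeasurable
    · intro p
      have : Function.uncurry H p = W p.1 p.2 * f p := rfl
      rw [this]
      simp only [norm_mul, Real.norm_eq_abs]
      have hW1 : |W p.1 p.2| ≤ 1 := by
        simp only [hWdef]
        split_ifs <;> norm_num
      calc |W p.1 p.2| * |f p| ≤ 1 * |f p| :=
            mul_le_mul_of_nonneg_right hW1 (abs_nonneg _)
        _ = |f p| := one_mul _
  -- Step 1 : rewrite the interval integral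
  have step1 : ∀ ξ : ℝ, (∫ ρ in τ..(τ + ξ), lam (ρ - ξ, ρ) * v ρ) = ∫ ρ : ℝ, H ξ ρ := by
    intro ξ
    have hgint : Integrable (fun ρ => lam (ρ - ξ, ρ) * v ρ) := by
      apply Continuous.integrable_of_hasCompactSupport
      · exact (hlam.comp (by continuity)).mul hv
      · exact hvc.mul_left
    rw [intervalIntegral, ← integral_indicator measurableSet_Ioc,
      ← integral_indicator measurableSet_Ioc,
      ← integral_sub (hgint.indicator measurableSet_Ioc) (hgint.indicator measurableSet_Ioc)]
    refine integral_congr_ae (Filter.Eventually.of_forall fun ρ => ?_)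
    simp only [Set.indicator_apply, Set.mem_Ioc, hHdef, hWdef, hfdef]
    split_ifs <;> ring
  -- Step 3 : the inner integral after swapping
  have step3 : ∀ ρ : ℝ, (∫ ξ : ℝ, H ξ ρ)
      = v ρ * ∫ ζ : ℝ, (θ (τ - ζ) - θ (τ - ρ)) * lam (ζ, ρ) := by
    intro ρ
    set G : ℝ → ℝ := fun ζ => (θ (τ - ζ) - θ (τ - ρ)) * lam (ζ, ρ) * v ρ with hGdef
    have key : ∀ ξ : ℝ, H ξ ρ = G (ρ - ξ) := by
      intro ξ
      simp only [hHdef, hWdef, hGdef, hfdef, hθ]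
      by_cases hρ : τ < ρ <;> by_cases hζ : ρ - ξ ≤ τ
      · rw [if_pos ⟨hρ, by linarith⟩, if_neg (fun h => absurd h.2 (not_le.mpr hρ)),
          if_pos (by linarith), if_neg (not_le.mpr (by linarith))]
        ring
      · rw [if_neg (fun h => absurd h.2 (by linarith)), if_neg (fun h => absurd h.2 (not_le.mpr hρ)),
          if_neg (not_le.mpr (by linarith)), if_neg (not_le.mpr (by linarith))]
        ring
      · rw [if_neg (fun h => absurd h.1 hρ), if_neg (fun h => absurd h.1 (by simp; linarith)),
          if_pos (by linarith), if_pos (by linarith)]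
        ring
      · rw [if_neg (fun h => absurd h.1 hρ), if_pos ⟨by linarith, by linarith⟩,
          if_neg (not_le.mpr (by linarith)), if_pos (by linarith)]
        ring
    calc (∫ ξ : ℝ, H ξ ρ) = ∫ ξ : ℝ, G (ρ - ξ) := by
          exact integral_congr_ae (Filter.Eventually.of_forall key)
      _ = ∫ ζ : ℝ, G ζ := integral_sub_left_eq_self G volume ρ
      _ = (∫ ζ : ℝ, (θ (τ - ζ) - θ (τ - ρ)) * lam (ζ, ρ)) * v ρ := by
          rw [← integral_mul_const]
      _ = v ρ * ∫ ζ : ℝ, (θ (τ - ζ) - θ (τ - ρ)) * lam (ζ, ρ) := mul_comm _ _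
  calc ∫ ξ : ℝ, (∫ ρ in τ..(τ + ξ), lam (ρ - ξ, ρ) * v ρ)
      = ∫ ξ : ℝ, ∫ ρ : ℝ, H ξ ρ :=
        integral_congr_ae (Filter.Eventually.of_forall step1)
    _ = ∫ ρ : ℝ, ∫ ξ : ℝ, H ξ ρ := integral_integral_swap hHint
    _ = ∫ ρ : ℝ, v ρ * ∫ ζ : ℝ, (θ (τ - ζ) - θ (τ - ρ)) * lam (ζ, ρ) :=
        integral_congr_ae (Filter.Eventually.of_forall step3)
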